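/- Let Y = f⁰ + ε with ε ∈ ℝ^n satisfying max_{1≤j≤p} 4|ε·ψ_j|/n ≤ λ_init. Suppose w_j > 0 for all j, let β̂_weight be any minimizer over ℝ^p of β ↦ ‖Y − Xβ‖_n² + λ_init·λ_weight·Σ_{j=1}^p w_j|β_j| (λ_init, λ_weight > 0), and let Ŝ_weight := {j : (β̂_weight)_j ≠ 0}. Let S, S₀ ⊆ {1,…,p} be index sets with λ_weight·min_{j∉S} w_j ≥ 1, and set A := (Ŝ_weight ∩ S^c)∖S₀. (i) If Λ ≥ 0 satisfies ‖Xγ‖_n ≤ Λ‖γ‖_2 for every γ supported on A, then |A|² ≤ 16Λ²·(‖Xβ̂_weight − f⁰‖_n²/λ_weight²)·(Σ_{j∈Ŝ_weight∖S₀} w_j^{−2})/λ_init². (ii) If in addition |A| > s₀ := |S₀| ≥ 1 and Λ_s ≥ 0 satisfies ‖Xγ‖_n ≤ Λ_s‖γ‖_2 for every γ supported on an index set of cardinality at most s₀, then |A| ≤ 32Λ_s²·(‖Xβ̂_weight − f⁰‖_n²/(λ_weight²·s₀))·(Σ_{j∈Ŝ_weight∖S₀} w_j^{−2})/λ_init².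 -/

import Mathlib

open Finset


/-- If a quadratic `a t² + b t` with `a ≥ 0` is nonnegative on a neighborhood of 0, `b = 0`. -/
private lemma quad_coeff_zero {a b δ : ℝ} (ha : 0 ≤ a) (hδ : 0 < δ)
    (h : ∀ t : ℝ, |t| < δ → 0 ≤ a * t ^ 2 + b * t) : b = 0 := by
  by_contra hb
  have hb' : 0 < |b| := abs_pos.mpr hb
  set θ : ℝ := min (δ / (2 * |b|)) (1 / (2 * (a + 1))) with hθdef
  have hθ : 0 < θ := lt_min (by positivity) (by positivity)
  have h1 : |(-b * θ)| < δ := by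
    have he : |(-b * θ)| = |b| * θ := by rw [abs_mul, abs_neg, abs_of_pos hθ]
    rw [he]
    have h3 : θ ≤ δ / (2 * |b|) := min_le_left _ _
    have : |b| * θ ≤ δ / 2 := by
      calc |b| * θ ≤ |b| * (δ / (2 * |b|)) := by nlinarith
        _ = δ / 2 := by field_simp
    linarith
  have h2 := h (-b * θ) h1
  have haθ : a * θ < 1 := by
    have h3 : θ ≤ 1 / (2 * (a + 1)) := min_le_right _ _
    have h4 : θ * (2 * (a + 1)) ≤ 1 := by
      rw [div_eq_mul_inv] at h3
      calc θ * (2 * (a + 1)) ≤ 1 * (2 * (a + 1))⁻¹ * (2 * (a + 1)) := by nlinarith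
        _ = 1 := by field_simp
    nlinarith
  have hb2 : 0 < b ^ 2 := by positivity
  have hkey : a * (-b * θ) ^ 2 + b * (-b * θ) = -(b ^ 2 * θ * (1 - a * θ)) := by ring
  rw [hkey] at h2
  nlinarith [mul_pos (mul_pos hb2 hθ) (by linarith : (0:ℝ) < 1 - a * θ)]

private lemma abs_add_eq_sign {x t : ℝ} (hx : x ≠ 0) (ht : |t| < |x|) :
    |x + t| = |x| + Real.sign x * t := by
  rcases hx.lt_or_gt with h | h
  · have h1 : t < -x := by
      have := (abs_lt.mp ht).2; rw [abs_of_neg h] at this; linarith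
    have hxt : x + t < 0 := by linarith
    rw [Real.sign_of_neg h, abs_of_neg h, abs_of_neg hxt]; ring
  · have h1 : -x < t := by
      have := (abs_lt.mp ht).1; rw [abs_of_pos h] at this; linarith
    have hxt : 0 < x + t := by linarith
    rw [Real.sign_of_pos h, abs_of_pos h, abs_of_pos hxt]; ring

private lemma sign_mul_self_abs (x : ℝ) : Real.sign x * x = |x| := by
  rcases lt_trichotomy x 0 with h | h | h
  · rw [Real.sign_of_neg h, abs_of_neg h]; ring
  · simp [h]
  · rw [Real.sign_of_pos h, abs_of_pos h]; ring

private lemma sign_sq_le_one (x : ℝ) : Real.sign x ^ 2 ≤ 1 := by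
  rcases lt_trichotomy x 0 with h | h | h
  · rw [Real.sign_of_neg h]; norm_num
  · simp [h]
  · rw [Real.sign_of_pos h]; norm_num

/-- Minkowski for two vectors given as sums of squares. -/
private lemma sqrt_sum_sq_add_le {ι : Type*} [Fintype ι] (x y : ι → ℝ) :
    Real.sqrt (∑ i, (x i + y i) ^ 2)
      ≤ Real.sqrt (∑ i, x i ^ 2) + Real.sqrt (∑ i, y i ^ 2) := by
  have hcs := Real.sum_mul_le_sqrt_mul_sqrt Finset.univ x y
  have hx : (0:ℝ) ≤ ∑ i, x i ^ 2 := by positivity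
  have hy : (0:ℝ) ≤ ∑ i, y i ^ 2 := by positivity
  have hexp : ∑ i, (x i + y i) ^ 2
      = (∑ i, x i ^ 2) + 2 * (∑ i, x i * y i) + ∑ i, y i ^ 2 := by
    rw [Finset.mul_sum, ← Finset.sum_add_distrib, ← Finset.sum_add_distrib]
    exact Finset.sum_congr rfl fun i _ => by ring
  have hb : (0:ℝ) ≤ Real.sqrt (∑ i, x i ^ 2) + Real.sqrt (∑ i, y i ^ 2) := by positivity
  have h1 : ∑ i, (x i + y i) ^ 2
      ≤ (Real.sqrt (∑ i, x i ^ 2) + Real.sqrt (∑ i, y i ^ 2)) ^ 2 := by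
    have e1 := Real.sq_sqrt hx
    have e2 := Real.sq_sqrt hy
    nlinarith [hcs]
  calc Real.sqrt (∑ i, (x i + y i) ^ 2)
      ≤ Real.sqrt ((Real.sqrt (∑ i, x i ^ 2) + Real.sqrt (∑ i, y i ^ 2)) ^ 2) :=
        Real.sqrt_le_sqrt h1
    _ = _ := Real.sqrt_sq hb

private lemma sqrt_sum_sq_sum_le {ι κ : Type*} [Fintype ι] [DecidableEq κ]
    (K : Finset κ) (v : κ → ι → ℝ) :
    Real.sqrt (∑ i, (∑ k ∈ K, v k i) ^ 2) ≤ ∑ k ∈ K, Real.sqrt (∑ i, (v k i) ^ 2) := by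
  induction K using Finset.induction_on with
  | empty => simp
  | insert a s ha ih =>
    simp only [Finset.sum_insert ha]
    calc Real.sqrt (∑ i, (v a i + ∑ k ∈ s, v k i) ^ 2)
        ≤ Real.sqrt (∑ i, (v a i) ^ 2) + Real.sqrt (∑ i, (∑ k ∈ s, v k i) ^ 2) :=
          sqrt_sum_sq_add_le _ _
      _ ≤ _ := by linarith

private lemma block_norm_bound {n p : ℕ} (hn : 0 < n) (X : Matrix (Fin n) (Fin p) ℝ)
    {s : ℕ} (hs : 0 < s) {Λs : ℝ} (hΛs0 : 0 ≤ Λs)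
    (hΛs : ∀ T : Finset (Fin p), T.card ≤ s → ∀ γ : Fin p → ℝ, (∀ j ∉ T, γ j = 0) →
      Real.sqrt ((∑ i, (X.mulVec γ i) ^ 2) / n) ≤ Λs * Real.sqrt (∑ j, (γ j) ^ 2))
    (A : Finset (Fin p)) (γ : Fin p → ℝ) (hγ : ∀ j ∉ A, γ j = 0) :
    Real.sqrt ((∑ i, (X.mulVec γ i) ^ 2) / n)
      ≤ Λs * Real.sqrt (((A.card - 1) / s + 1 : ℕ)) * Real.sqrt (∑ j, (γ j) ^ 2) := by
  classical
  set m := A.card with hm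
  set N := (m - 1) / s + 1 with hN
  set e := A.equivFin with he
  set idx : Fin p → ℕ := fun j => if h : j ∈ A then (e ⟨j, h⟩ : ℕ) else 0 with hidx
  have idx_lt : ∀ j ∈ A, idx j < m := by
    intro j hj; simp only [hidx, dif_pos hj]; exact (e ⟨j, hj⟩).isLt
  have idx_inj : ∀ j₁ ∈ A, ∀ j₂ ∈ A, idx j₁ = idx j₂ → j₁ = j₂ := by
    intro j₁ h₁ j₂ h₂ h
    simp only [hidx, dif_pos h₁, dif_pos h₂] at h
    have h2 : e ⟨j₁, h₁⟩ = e ⟨j₂, h₂⟩ := Fin.ext h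
    have := e.injective h2
    exact congrArg Subtype.val this
  set γk : ℕ → Fin p → ℝ := fun k j => if j ∈ A ∧ idx j / s = k then γ j else 0 with hγk
  have hltN : ∀ j ∈ A, idx j / s < N := by
    intro j hj
    have h1 : idx j ≤ m - 1 := Nat.le_sub_one_of_lt (idx_lt j hj)
    calc idx j / s ≤ (m - 1) / s := Nat.div_le_div_right h1
      _ < N := Nat.lt_succ_self _
  have hdecomp : ∀ j, γ j = ∑ k ∈ Finset.range N, γk k j := by
    intro j
    by_cases hj : j ∈ A
    · rw [Finset.sum_eq_single (idx j / s)]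
      · simp [hγk, hj]
      · intro k _ hne; simp only [hγk]
        rw [if_neg (fun hc => hne hc.2.symm)]
      · intro h; exact absurd (Finset.mem_range.mpr (hltN j hj)) h
    · rw [hγ j hj, Finset.sum_eq_zero]
      intro k _; simp [hγk, hj]
  have hsupp : ∀ k, ∀ j ∉ A.filter (fun j => idx j / s = k), γk k j = 0 := by
    intro k j hj
    simp only [Finset.mem_filter, not_and] at hj
    by_cases hjA : j ∈ A
    · simp [hγk, hj hjA]
    · simp [hγk, hjA]
  have hcard : ∀ k, (A.filter (fun j => idx j / s = k)).card ≤ s := by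
    intro k
    have h := Finset.card_le_card_of_injOn
      (s := Finset.filter (fun j => idx j / s = k) A) (t := Finset.range s)
      (fun j => idx j % s)
      (fun a _ => Finset.mem_range.mpr (Nat.mod_lt _ hs)) ?_
    · simpa using h
    · intro j₁ h₁ j₂ h₂ hmod
      simp only [Finset.coe_filter, Set.mem_setOf_eq] at h₁ h₂
      have hmod' : idx j₁ % s = idx j₂ % s := hmod
      have hidxeq : idx j₁ = idx j₂ := by
        have d1 := h₁.2; have d2 := h₂.2
        calc idx j₁ = s * (idx j₁ / s) + idx j₁ % s := (Nat.div_add_mod _ _).symm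
          _ = s * (idx j₂ / s) + idx j₂ % s := by rw [d1, d2, hmod']
          _ = idx j₂ := Nat.div_add_mod _ _
      exact idx_inj j₁ h₁.1 j₂ h₂.1 hidxeq
  have hμ : ∀ k, Real.sqrt ((∑ i, (X.mulVec (γk k) i) ^ 2) / n)
      ≤ Λs * Real.sqrt (∑ j, (γk k j) ^ 2) :=
    fun k => hΛs _ (hcard k) _ (hsupp k)
  have hmv : ∀ i, X.mulVec γ i = ∑ k ∈ Finset.range N, X.mulVec (γk k) i := by
    intro i
    simp only [Matrix.mulVec, dotProduct]
    have h1 : ∀ j ∈ Finset.univ, X i j * γ j = ∑ k ∈ Finset.range N, X i j * γk k j := by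
      intro j _; rw [hdecomp j, Finset.mul_sum]
    rw [Finset.sum_congr rfl h1, Finset.sum_comm]
  have tri : Real.sqrt (∑ i, (X.mulVec γ i) ^ 2)
      ≤ ∑ k ∈ Finset.range N, Real.sqrt (∑ i, (X.mulVec (γk k) i) ^ 2) := by
    have h1 : ∑ i, (X.mulVec γ i) ^ 2
        = ∑ i, (∑ k ∈ Finset.range N, X.mulVec (γk k) i) ^ 2 :=
      Finset.sum_congr rfl fun i _ => by rw [hmv i]
    rw [h1]
    exact sqrt_sum_sq_sum_le _ _
  have hsumsq : ∑ k ∈ Finset.range N, ∑ j, (γk k j) ^ 2 = ∑ j, γ j ^ 2 := by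
    rw [Finset.sum_comm]
    apply Finset.sum_congr rfl; intro j _
    by_cases hj : j ∈ A
    · rw [Finset.sum_eq_single (idx j / s)]
      · simp [hγk, hj]
      · intro k _ hne; simp only [hγk]
        rw [if_neg (fun hc => hne hc.2.symm)]
        norm_num
      · intro h; exact absurd (Finset.mem_range.mpr (hltN j hj)) h
    · rw [hγ j hj, Finset.sum_eq_zero]
      · simp
      · intro k _; simp [hγk, hj]
  have hsqn : (0:ℝ) < Real.sqrt n := Real.sqrt_pos.mpr (by exact_mod_cast hn)
  calc Real.sqrt ((∑ i, (X.mulVec γ i) ^ 2) / n)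
      = Real.sqrt (∑ i, (X.mulVec γ i) ^ 2) / Real.sqrt n := Real.sqrt_div (by positivity) _
    _ ≤ (∑ k ∈ Finset.range N, Real.sqrt (∑ i, (X.mulVec (γk k) i) ^ 2)) / Real.sqrt n := by
        gcongr
    _ = ∑ k ∈ Finset.range N, Real.sqrt ((∑ i, (X.mulVec (γk k) i) ^ 2) / n) := by
        rw [Finset.sum_div]
        exact Finset.sum_congr rfl fun k _ => (Real.sqrt_div (by positivity) _).symm
    _ ≤ ∑ k ∈ Finset.range N, Λs * Real.sqrt (∑ j, (γk k j) ^ 2) :=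
        Finset.sum_le_sum fun k _ => hμ k
    _ = Λs * ∑ k ∈ Finset.range N, Real.sqrt (∑ j, (γk k j) ^ 2) := by rw [Finset.mul_sum]
    _ ≤ Λs * (Real.sqrt N * Real.sqrt (∑ k ∈ Finset.range N, ∑ j, (γk k j) ^ 2)) := by
        apply mul_le_mul_of_nonneg_left ?_ hΛs0
        have h := Real.sum_sqrt_mul_sqrt_le (Finset.range N)
          (f := fun _ => (1:ℝ)) (g := fun k => ∑ j, (γk k j) ^ 2)
          (fun _ => zero_le_one) (fun k => by positivity)
        simpa using h
    _ = Λs * Real.sqrt N * Real.sqrt (∑ j, (γ j) ^ 2) := by rw [hsumsq, mul_assoc]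

set_option maxHeartbeats 1000000 in
/-- Variable-selection parts of Theorem `weightnoise` for the noisy weighted Lasso
on the event 𝒯. -/
theorem noisy_weighted_lasso_selection
    (n p : ℕ) (hn : 0 < n)
    (X : Matrix (Fin n) (Fin p) ℝ) (f0 : Fin n → ℝ)
    (ε : Fin n → ℝ) (Y : Fin n → ℝ) (hY : ∀ i, Y i = f0 i + ε i)
    (w : Fin p → ℝ) (hw : ∀ j, 0 < w j)
    (lamInit lamWeight : ℝ) (hlamInit : 0 < lamInit) (hlamWeight : 0 < lamWeight)
    (hnoise : ∀ j, 4 * |∑ i, ε i * X i j| / n ≤ lamInit)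
    (βw : Fin p → ℝ)
    (hβw : ∀ β : Fin p → ℝ,
      (∑ i, (Y i - X.mulVec βw i) ^ 2) / n + lamInit * lamWeight * ∑ j, w j * |βw j|
        ≤ (∑ i, (Y i - X.mulVec β i) ^ 2) / n + lamInit * lamWeight * ∑ j, w j * |β j|)
    (Sw : Finset (Fin p)) (hSw : ∀ j, j ∈ Sw ↔ βw j ≠ 0)
    (S S0 : Finset (Fin p))
    (hlww : ∀ j ∉ S, 1 ≤ lamWeight * w j)
    (Λ : ℝ) (hΛ0 : 0 ≤ Λ)
    (hΛ : ∀ γ : Fin p → ℝ, (∀ j ∉ (Sw ∩ Sᶜ) \ S0, γ j = 0) →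
      Real.sqrt ((∑ i, (X.mulVec γ i) ^ 2) / n) ≤ Λ * Real.sqrt (∑ j, (γ j) ^ 2))
    (Λs : ℝ) (hΛs0 : 0 ≤ Λs)
    (hΛs : ∀ T : Finset (Fin p), T.card ≤ S0.card →
      ∀ γ : Fin p → ℝ, (∀ j ∉ T, γ j = 0) →
      Real.sqrt ((∑ i, (X.mulVec γ i) ^ 2) / n) ≤ Λs * Real.sqrt (∑ j, (γ j) ^ 2)) :
    (((Sw ∩ Sᶜ) \ S0).card : ℝ) ^ 2
        ≤ 16 * Λ ^ 2 * (((∑ i, (X.mulVec βw i - f0 i) ^ 2) / n) / lamWeight ^ 2)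
            * (∑ j ∈ Sw \ S0, ((w j)⁻¹) ^ 2) / lamInit ^ 2
      ∧ (1 ≤ S0.card → S0.card < ((Sw ∩ Sᶜ) \ S0).card →
          (((Sw ∩ Sᶜ) \ S0).card : ℝ)
            ≤ 32 * Λs ^ 2
                * (((∑ i, (X.mulVec βw i - f0 i) ^ 2) / n) / (lamWeight ^ 2 * S0.card))
                * (∑ j ∈ Sw \ S0, ((w j)⁻¹) ^ 2) / lamInit ^ 2) := by
  classical
  have hn' : (0:ℝ) < n := by exact_mod_cast hn
  have hn0 : (n:ℝ) ≠ 0 := ne_of_gt hn'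
  set A : Finset (Fin p) := (Sw ∩ Sᶜ) \ S0 with hA
  set R : ℝ := ∑ i, (X.mulVec βw i - f0 i) ^ 2 with hRdef
  set W : ℝ := ∑ j ∈ Sw \ S0, ((w j)⁻¹) ^ 2 with hWdef
  set z : Fin p → ℝ := fun j => ∑ i, (X.mulVec βw i - f0 i) * X i j with hzdef
  have hR0 : 0 ≤ R := by rw [hRdef]; positivity
  have hW0 : 0 ≤ W := by rw [hWdef]; positivity
  -- KKT conditions
  have kkt : ∀ j, βw j ≠ 0 →
      2 * (∑ i, (Y i - X.mulVec βw i) * X i j)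
        = (n : ℝ) * (lamInit * lamWeight * w j * Real.sign (βw j)) := by
    intro j hj
    set Z : ℝ := ∑ i, (Y i - X.mulVec βw i) * X i j with hZ
    set Q : ℝ := ∑ i, (X i j) ^ 2 with hQ
    have key : ∀ t : ℝ, |t| < |βw j| →
        0 ≤ (Q / n) * t ^ 2
          + (-(2 * Z / n) + lamInit * lamWeight * w j * Real.sign (βw j)) * t := by
      intro t ht
      have hupd : Function.update βw j (βw j + t) = βw + t • (Pi.single j 1 : Fin p → ℝ) := by
        funext k
        by_cases hk : k = j
        · subst hk; simp
        · simp [Function.update_of_ne hk, Pi.single_apply, hk]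
      have hmv : ∀ i, X.mulVec (Function.update βw j (βw j + t)) i
          = X.mulVec βw i + t * X i j := by
        intro i
        rw [hupd, Matrix.mulVec_add, Matrix.mulVec_smul]
        simp [Matrix.mulVec_single]
      have h1 := hβw (Function.update βw j (βw j + t))
      have hquad : ∑ i, (Y i - X.mulVec (Function.update βw j (βw j + t)) i) ^ 2
          = (∑ i, (Y i - X.mulVec βw i) ^ 2) - 2 * t * Z + t ^ 2 * Q := by
        have hpt : ∀ i ∈ Finset.univ,
            (Y i - X.mulVec (Function.update βw j (βw j + t)) i) ^ 2
            = (Y i - X.mulVec βw i) ^ 2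
              - 2 * t * ((Y i - X.mulVec βw i) * X i j) + t ^ 2 * (X i j) ^ 2 := by
          intro i _; rw [hmv i]; ring
        rw [Finset.sum_congr rfl hpt, Finset.sum_add_distrib, Finset.sum_sub_distrib,
          ← Finset.mul_sum, ← Finset.mul_sum]
      have hpen : ∑ k, w k * |Function.update βw j (βw j + t) k|
          = (∑ k, w k * |βw k|) + w j * (|βw j + t| - |βw j|) := by
        have hsub : ∑ k, (w k * |Function.update βw j (βw j + t) k| - w k * |βw k|)
            = w j * |βw j + t| - w j * |βw j| := by
          rw [Finset.sum_eq_single j]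
          · rw [Function.update_self]
          · intro k _ hk; rw [Function.update_of_ne hk]; ring
          · intro h; exact absurd (Finset.mem_univ j) h
        rw [Finset.sum_sub_distrib] at hsub
        linarith
      have habs : |βw j + t| = |βw j| + Real.sign (βw j) * t := abs_add_eq_sign hj ht
      rw [hquad, hpen, habs] at h1
      have h2 : 0 ≤ (-(2 * t * Z) + t ^ 2 * Q) / n
          + lamInit * lamWeight * (w j * (Real.sign (βw j) * t)) := by
        have hsplit : ((∑ i, (Y i - X.mulVec βw i) ^ 2) - 2 * t * Z + t ^ 2 * Q) / n
            = (∑ i, (Y i - X.mulVec βw i) ^ 2) / n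
              + (-(2 * t * Z) + t ^ 2 * Q) / n := by ring
        rw [hsplit] at h1
        nlinarith [h1]
      have hdist : (-(2 * t * Z) + t ^ 2 * Q) / n
          + lamInit * lamWeight * (w j * (Real.sign (βw j) * t))
          = (Q / n) * t ^ 2
            + (-(2 * Z / n) + lamInit * lamWeight * w j * Real.sign (βw j)) * t := by
        ring
      linarith [h2, hdist.symm.le, hdist.le]
    have hb := quad_coeff_zero (by rw [hQ]; positivity)
      (abs_pos.mpr hj) key
    have : 2 * Z / n = lamInit * lamWeight * w j * Real.sign (βw j) := by linarith
    field_simp at this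
    linarith [this]
  
  have hsign : ∀ j, βw j ≠ 0 → |Real.sign (βw j)| = 1 := by
    intro j hj
    rcases hj.lt_or_gt with h | h
    · rw [Real.sign_of_neg h]; norm_num
    · rw [Real.sign_of_pos h]; norm_num
  have hAsub : A ⊆ Sw \ S0 := by
    intro j hj
    rw [hA, Finset.mem_sdiff, Finset.mem_inter] at hj
    exact Finset.mem_sdiff.mpr ⟨hj.1.1, hj.2⟩
  have hzlb : ∀ j ∈ A, (n:ℝ) * lamInit * lamWeight * w j / 4 ≤ |z j| := by
    intro j hjA
    rw [hA, Finset.mem_sdiff, Finset.mem_inter, Finset.mem_compl] at hjA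
    obtain ⟨⟨hjSw, hjS⟩, hjS0⟩ := hjA
    have hj0 : βw j ≠ 0 := (hSw j).mp hjSw
    have hk := kkt j hj0
    have hrel : (∑ i, (Y i - X.mulVec βw i) * X i j) = (∑ i, ε i * X i j) - z j := by
      rw [hzdef, ← Finset.sum_sub_distrib]
      exact Finset.sum_congr rfl fun i _ => by rw [hY i]; ring
    rw [hrel] at hk
    have hE : |∑ i, ε i * X i j| ≤ lamInit * n / 4 := by
      have h := hnoise j
      rw [div_le_iff₀ hn'] at h
      linarith
    have hz_eq : z j = (∑ i, ε i * X i j)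
        - (n:ℝ) * (lamInit * lamWeight * w j * Real.sign (βw j)) / 2 := by linarith
    have hre : (n:ℝ) * (lamInit * lamWeight * w j * Real.sign (βw j)) / 2
        = ((n:ℝ) * (lamInit * lamWeight * w j) / 2) * Real.sign (βw j) := by ring
    have hcabs : |(n:ℝ) * (lamInit * lamWeight * w j * Real.sign (βw j)) / 2|
        = (n:ℝ) * (lamInit * lamWeight * w j) / 2 := by
      rw [hre, abs_mul, hsign j hj0, mul_one, abs_of_pos (div_pos (mul_pos hn' (mul_pos (mul_pos hlamInit hlamWeight) (hw j))) two_pos)]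
    have h1 : 1 ≤ lamWeight * w j := hlww j hjS
    have h2 := abs_sub_abs_le_abs_sub
      ((n:ℝ) * (lamInit * lamWeight * w j * Real.sign (βw j)) / 2) (∑ i, ε i * X i j)
    rw [hcabs] at h2
    have h3 : |(n:ℝ) * (lamInit * lamWeight * w j * Real.sign (βw j)) / 2
        - (∑ i, ε i * X i j)| = |z j| := by
      rw [hz_eq, abs_sub_comm]
    rw [h3] at h2
    have h4 : (0:ℝ) ≤ (n * lamInit) * (lamWeight * w j - 1) :=
      mul_nonneg (mul_nonneg hn'.le hlamInit.le) (by linarith)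
    nlinarith [h2, hE]
  set γ : Fin p → ℝ := fun j => if j ∈ A then Real.sign (z j) * (w j)⁻¹ else 0 with hγdef
  have hγ0 : ∀ j ∉ A, γ j = 0 := by intro j hj; simp only [hγdef]; rw [if_neg hj]
  have hγsq : ∑ j, γ j ^ 2 ≤ W := by
    have h0 : ∀ j ∈ Finset.univ, γ j ^ 2
        = if j ∈ A then (Real.sign (z j) * (w j)⁻¹) ^ 2 else 0 := by
      intro j _; simp only [hγdef]; split_ifs <;> simp
    rw [Finset.sum_congr rfl h0, Finset.sum_ite_mem, Finset.univ_inter]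
    calc ∑ j ∈ A, (Real.sign (z j) * (w j)⁻¹) ^ 2 ≤ ∑ j ∈ A, ((w j)⁻¹) ^ 2 := by
          apply Finset.sum_le_sum; intro j _
          rw [mul_pow]
          nlinarith [sign_sq_le_one (z j), sq_nonneg ((w j)⁻¹)]
      _ ≤ W := by
          rw [hWdef]
          exact Finset.sum_le_sum_of_subset_of_nonneg hAsub (fun j _ _ => by positivity)
  have hident : ∑ i, X.mulVec γ i * (X.mulVec βw i - f0 i) = ∑ j ∈ A, γ j * z j := by
    have h1 : ∀ i ∈ Finset.univ, X.mulVec γ i * (X.mulVec βw i - f0 i)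
        = ∑ j, X i j * γ j * (X.mulVec βw i - f0 i) := by
      intro i _
      simp only [Matrix.mulVec, dotProduct]
      rw [Finset.sum_mul]
    rw [Finset.sum_congr rfl h1, Finset.sum_comm]
    have h2 : ∀ j ∈ Finset.univ, (∑ i, X i j * γ j * (X.mulVec βw i - f0 i)) = γ j * z j := by
      intro j _
      rw [hzdef, Finset.mul_sum]
      exact Finset.sum_congr rfl fun i _ => by ring
    rw [Finset.sum_congr rfl h2]
    exact (Finset.sum_subset (Finset.subset_univ A)
      (fun j _ hj => by rw [hγ0 j hj, zero_mul])).symm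
  have hsum_lb : (A.card : ℝ) * ((n:ℝ) * lamInit * lamWeight / 4) ≤ ∑ j ∈ A, γ j * z j := by
    have h1 : ∀ j ∈ A, (n:ℝ) * lamInit * lamWeight / 4 ≤ γ j * z j := by
      intro j hj
      have hγj : γ j = Real.sign (z j) * (w j)⁻¹ := by simp only [hγdef]; rw [if_pos hj]
      have he : γ j * z j = |z j| * (w j)⁻¹ := by
        rw [hγj, mul_comm (Real.sign (z j)) ((w j)⁻¹), mul_assoc, sign_mul_self_abs]
        ring
      rw [he]
      have h2 := hzlb j hj
      have h3 : (n:ℝ)*lamInit*lamWeight*w j/4 * (w j)⁻¹ ≤ |z j| * (w j)⁻¹ :=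
        mul_le_mul_of_nonneg_right h2 (le_of_lt (inv_pos.mpr (hw j)))
      have h4 : (n:ℝ)*lamInit*lamWeight*w j/4 * (w j)⁻¹
          = (n:ℝ)*lamInit*lamWeight/4 * (w j * (w j)⁻¹) := by ring
      rw [h4, mul_inv_cancel₀ (ne_of_gt (hw j)), mul_one] at h3
      linarith
    calc (A.card : ℝ) * ((n:ℝ) * lamInit * lamWeight / 4)
        = ∑ _j ∈ A, (n:ℝ)*lamInit*lamWeight/4 := by
          rw [Finset.sum_const, nsmul_eq_mul]
      _ ≤ _ := Finset.sum_le_sum h1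
  have main : ∀ Λ' : ℝ, 0 ≤ Λ' →
      Real.sqrt ((∑ i, (X.mulVec γ i) ^ 2) / n) ≤ Λ' * Real.sqrt (∑ j, (γ j) ^ 2) →
      ((A.card:ℝ) * ((n:ℝ) * lamInit * lamWeight / 4)) ^ 2 ≤ (n:ℝ) * Λ'^2 * W * R := by
    intro Λ' hΛ'0 hbound
    have hcs : ∑ i, X.mulVec γ i * (X.mulVec βw i - f0 i)
        ≤ Real.sqrt (∑ i, (X.mulVec γ i)^2) * Real.sqrt R := by
      rw [hRdef]
      exact Real.sum_mul_le_sqrt_mul_sqrt _ _ _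
    have hXγ : Real.sqrt (∑ i, (X.mulVec γ i)^2) ≤ Real.sqrt n * (Λ' * Real.sqrt W) := by
      have e1 : (∑ i, (X.mulVec γ i)^2) = n * ((∑ i, (X.mulVec γ i)^2)/n) := by
        field_simp
      rw [e1, Real.sqrt_mul hn'.le]
      have h2 : Real.sqrt (∑ j, γ j ^2) ≤ Real.sqrt W := Real.sqrt_le_sqrt hγsq
      have h3 : Λ' * Real.sqrt (∑ j, γ j^2) ≤ Λ' * Real.sqrt W :=
        mul_le_mul_of_nonneg_left h2 hΛ'0
      exact mul_le_mul_of_nonneg_left (le_trans hbound h3) (Real.sqrt_nonneg _)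
    have hineq : (A.card:ℝ) * ((n:ℝ)*lamInit*lamWeight/4)
        ≤ Real.sqrt n * (Λ' * Real.sqrt W) * Real.sqrt R := by
      calc (A.card:ℝ) * ((n:ℝ)*lamInit*lamWeight/4) ≤ ∑ j ∈ A, γ j * z j := hsum_lb
        _ = ∑ i, X.mulVec γ i * (X.mulVec βw i - f0 i) := hident.symm
        _ ≤ Real.sqrt (∑ i, (X.mulVec γ i)^2) * Real.sqrt R := hcs
        _ ≤ Real.sqrt n * (Λ' * Real.sqrt W) * Real.sqrt R :=
            mul_le_mul_of_nonneg_right hXγ (Real.sqrt_nonneg _)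
    have hLnn : 0 ≤ (A.card:ℝ) * ((n:ℝ)*lamInit*lamWeight/4) := by positivity
    calc ((A.card:ℝ) * ((n:ℝ)*lamInit*lamWeight/4))^2
        ≤ (Real.sqrt n * (Λ' * Real.sqrt W) * Real.sqrt R)^2 := pow_le_pow_left₀ hLnn hineq 2
      _ = (n:ℝ) * Λ'^2 * W * R := by
          rw [mul_pow, mul_pow, mul_pow, Real.sq_sqrt hn'.le, Real.sq_sqrt hW0,
            Real.sq_sqrt hR0]
          ring
  constructor
  · have H1 := main Λ hΛ0 (hΛ γ hγ0)
    have hc : (0:ℝ) < (n:ℝ)^2 * lamInit^2 * lamWeight^2 / 16 := by positivity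
    rw [← mul_le_mul_iff_of_pos_right hc]
    calc (A.card:ℝ)^2 * ((n:ℝ)^2*lamInit^2*lamWeight^2/16)
        = ((A.card:ℝ) * ((n:ℝ)*lamInit*lamWeight/4))^2 := by ring
      _ ≤ (n:ℝ)*Λ^2*W*R := H1
      _ = 16 * Λ ^ 2 * (R / (n:ℝ) / lamWeight ^ 2) * W / lamInit ^ 2
            * ((n:ℝ)^2*lamInit^2*lamWeight^2/16) := by
          field_simp
  · intro hs1 hs2
    have hs : 0 < S0.card := hs1
    have hbound := block_norm_bound hn X hs hΛs0 hΛs A γ hγ0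
    set N : ℕ := (A.card - 1)/S0.card + 1 with hNdef
    have H2 := main (Λs * Real.sqrt N) (by positivity) hbound
    have hNsq : (Λs * Real.sqrt N)^2 = Λs^2 * N := by
      rw [mul_pow, Real.sq_sqrt (Nat.cast_nonneg N)]
    rw [hNsq] at H2
    have hm1 : 1 ≤ A.card := le_trans hs1 (le_of_lt hs2)
    have hscast : (0:ℝ) < S0.card := by exact_mod_cast hs
    have hNle : (N:ℝ) ≤ 2 * A.card / S0.card := by
      have h1 : ((A.card - 1 : ℕ) : ℝ) = (A.card:ℝ) - 1 := by
        rw [Nat.cast_sub hm1]; norm_num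
      have h2 : (((A.card - 1)/S0.card : ℕ):ℝ) ≤ ((A.card - 1 : ℕ):ℝ) / (S0.card:ℝ) :=
        Nat.cast_div_le
      have h3 : (N:ℝ) = (((A.card-1)/S0.card : ℕ):ℝ) + 1 := by rw [hNdef]; push_cast; ring
      rw [h3]
      have hAS : (S0.card:ℝ) ≤ (A.card:ℝ) := by exact_mod_cast le_of_lt hs2
      have h4 : ((A.card:ℝ) - 1)/S0.card + 1 ≤ 2*A.card/S0.card := by
        rw [div_add' _ _ _ (ne_of_gt hscast), div_le_div_iff₀ hscast hscast]
        nlinarith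
      calc (((A.card-1)/S0.card : ℕ):ℝ) + 1 ≤ ((A.card:ℝ)-1)/S0.card + 1 := by
            rw [h1] at h2; linarith
        _ ≤ _ := h4
    have hmpos : (0:ℝ) < A.card := by exact_mod_cast lt_of_lt_of_le Nat.zero_lt_one hm1
    have H3 : ((A.card:ℝ) * ((n:ℝ)*lamInit*lamWeight/4))^2
        ≤ (n:ℝ) * (Λs^2 * (2*A.card/S0.card)) * W * R := by
      refine le_trans H2 ?_
      apply mul_le_mul_of_nonneg_right ?_ hR0
      apply mul_le_mul_of_nonneg_right ?_ hW0
      apply mul_le_mul_of_nonneg_left ?_ hn'.le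
      exact mul_le_mul_of_nonneg_left hNle (by positivity)
    have hc : (0:ℝ) < (A.card:ℝ) * ((n:ℝ)^2 * lamInit^2 * lamWeight^2 / 16) := by positivity
    rw [← mul_le_mul_iff_of_pos_right hc]
    calc (A.card:ℝ) * ((A.card:ℝ) * ((n:ℝ)^2*lamInit^2*lamWeight^2/16))
        = ((A.card:ℝ) * ((n:ℝ)*lamInit*lamWeight/4))^2 := by ring
      _ ≤ (n:ℝ) * (Λs^2 * (2*A.card/S0.card)) * W * R := H3
      _ = 32 * Λs ^ 2 * (R / (n:ℝ) / (lamWeight ^ 2 * S0.card)) * W / lamInit ^ 2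
            * ((A.card:ℝ)*((n:ℝ)^2*lamInit^2*lamWeight^2/16)) := by
          field_simp
          ring
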